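/- Let R be a real closed field, σ ⊂ R^n an n-dimensional simplex, τ a face of σ of dimension d, and L the affine subspace generated by τ. Let ε > 0 be small enough that Ū_{τ,ε} ∖ ∂τ only meets the faces of σ containing τ. Then for each p ∈ σ ∖ τ, one has σ ∩ [L,p] ∩ Ū_{τ,ε} = [L,p]⁺ ∩ Ū_{τ,ε}, where [L,p] is the affine subspace generated by L and p and [L,p]⁺ is its closed half-space determined by L that contains p. -/

import Mathlib

open Topology Filter Set

/-- A real closed field: nonnegative elements are squares and every polynomial of odd
degree has a root. -/
def IsRealClosedField (K : Type*) [Field K] [LinearOrder K] [IsStrictOrderedRing K] : Prop :=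
  (∀ x : K, 0 ≤ x → ∃ y, y * y = x) ∧
    ∀ p : Polynomial K, Odd p.natDegree → ∃ x, Polynomial.IsRoot p x

section Semialgebraic

variable {R F : Type*} [Field R] [LinearOrder R] [IsStrictOrderedRing R] [Field F] [LinearOrder F] [IsStrictOrderedRing F]

/-- Realization in `F^n` (through the coefficient map `ι`) of a presentation:
a finite union of finite intersections of sets `{p > 0}` (flag `true`) and
`{p = 0}` (flag `false`), where the `p` are polynomials with coefficients in `R`. -/
def SAset {n : ℕ} (ι : R →+* F) (P : List (List (MvPolynomial (Fin n) R × Bool))) :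
    Set (Fin n → F) :=
  {x | ∃ c ∈ P, ∀ q ∈ c,
      (q.2 = true → 0 < MvPolynomial.eval x (MvPolynomial.map ι q.1)) ∧
      (q.2 = false → MvPolynomial.eval x (MvPolynomial.map ι q.1) = 0)}

/-- A set `M ⊆ R^n` is semialgebraic if it admits a presentation. -/
def IsSemialgebraic {n : ℕ} (M : Set (Fin n → R)) : Prop :=
  ∃ P, M = SAset (RingHom.id R) P

/-- `N ⊆ F^n` is the extension of `M ⊆ R^n` to `F`: some presentation defines both. -/
def ExtendsTo {n : ℕ} (ι : R →+* F) (M : Set (Fin n → R)) (N : Set (Fin n → F)) : Prop :=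
  ∃ P, M = SAset (RingHom.id R) P ∧ N = SAset ι P

/-- The graph over `M` of a function `f`, as a subset of `R^(n+1)`. -/
def graphOn {n : ℕ} (M : Set (Fin n → R)) (f : (Fin n → R) → R) :
    Set (Fin (n + 1) → R) :=
  {z | (fun i : Fin n => z i.castSucc) ∈ M ∧
    z (Fin.last n) = f (fun i : Fin n => z i.castSucc)}

/-- `g` is the extension to `MF` of the semialgebraic function `f` on `M`:
the graph of `g` over `MF` is the extension of the graph of `f` over `M`. -/
def FnExtendsTo {n : ℕ} (ι : R →+* F) (M : Set (Fin n → R)) (MF : Set (Fin n → F))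
    (f : (Fin n → R) → R) (g : (Fin n → F) → F) : Prop :=
  ExtendsTo ι (graphOn M f) (graphOn MF g)

end Semialgebraic

section Topological

variable {R F : Type*} [Field R] [LinearOrder R] [IsStrictOrderedRing R] [Field F] [LinearOrder F] [IsStrictOrderedRing F]
  [TopologicalSpace R] [TopologicalSpace F]

/-- `p ∈ F^n` is adjacent to `M`: it lies in the extension of every locally closed
semialgebraic set containing `M`. -/
def AdjacentTo {n : ℕ} (ι : R →+* F) (M : Set (Fin n → R)) (p : Fin n → F) : Prop :=
  ∀ N : Set (Fin n → R), IsSemialgebraic N → M ⊆ N → IsLocallyClosed N →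
    ∀ NF : Set (Fin n → F), ExtendsTo ι N NF → p ∈ NF

/-- Dimension of a set `S ⊆ R^n`: the largest `d` such that the projection of `S`
to some `d` coordinates has nonempty interior. -/
noncomputable def saDim {n : ℕ} (S : Set (Fin n → R)) : ℕ :=
  sSup {d : ℕ | ∃ g : Fin d → Fin n, Function.Injective g ∧
    (interior ((fun x : Fin n → R => x ∘ g) '' S)).Nonempty}

/-- Local dimension of `S` at `q`: minimum of `saDim (S ∩ U)` over open `U ∋ q`. -/
noncomputable def localDim {n : ℕ} (S : Set (Fin n → R)) (q : Fin n → R) : ℕ :=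
  sInf {d : ℕ | ∃ U : Set (Fin n → R), IsOpen U ∧ q ∈ U ∧ saDim (S ∩ U) = d}

/-- Semialgebraic connectedness. -/
def SAConnected {n : ℕ} (S : Set (Fin n → R)) : Prop :=
  ∀ A B : Set (Fin n → R), IsSemialgebraic A → IsSemialgebraic B → IsOpen A → IsOpen B →
    S ⊆ A ∪ B → S ∩ A ∩ B = ∅ → S ⊆ A ∨ S ⊆ B

/-- The germ of `M` at `q` is semialgebraically connected: arbitrarily small
semialgebraic neighborhoods of `q` meet `M` in a semialgebraically connected set. -/
def GermSAConnected {n : ℕ} (M : Set (Fin n → R)) (q : Fin n → R) : Prop :=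
  ∀ U : Set (Fin n → R), IsOpen U → q ∈ U →
    ∃ V : Set (Fin n → R), IsSemialgebraic V ∧ V ⊆ U ∧ q ∈ interior V ∧
      SAConnected (M ∩ V)

/-- Boundedness in `R^n`. -/
def BoundedSet {n : ℕ} (M : Set (Fin n → R)) : Prop :=
  ∃ r : R, ∀ x ∈ M, ∀ i, |x i| ≤ r

/-- `M` is appropriately embedded: bounded, and at each point `q ∈ Cl(M) ∖ M` the germ
`M_q` is semialgebraically connected and either `Cl(M)_q = M_q` or
`dim(Cl(M)_q ∖ M_q) = dim M_q - 1`. -/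
def AppropriatelyEmbedded {n : ℕ} (M : Set (Fin n → R)) : Prop :=
  BoundedSet M ∧ ∀ q ∈ closure M \ M, GermSAConnected M q ∧
    ((∃ U : Set (Fin n → R), IsOpen U ∧ q ∈ U ∧ closure M ∩ U = M ∩ U) ∨
      localDim (closure M \ M) q + 1 = localDim M q)

/-- The obstruction set `η(M)`. -/
def etaSet {n : ℕ} (M : Set (Fin n → R)) : Set (Fin n → R) :=
  {q | q ∈ closure M \ M ∧
    (localDim (closure M \ M) q + 1 < localDim M q ∨ ¬ GermSAConnected M q)}

/-- Semialgebraic depth of `p ∈ F^n` relative to `X ⊆ R^n`: minimal dimension of a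
closed semialgebraic subset `N` of `X` with `p ∈ N_F`. -/
noncomputable def saDepth {n : ℕ} (ι : R →+* F) (X : Set (Fin n → R))
    (p : Fin n → F) : ℕ :=
  sInf {d : ℕ | ∃ (N : Set (Fin n → R)) (NF : Set (Fin n → F)),
    IsSemialgebraic N ∧ N ⊆ X ∧ (∃ C, IsClosed C ∧ N = C ∩ X) ∧
    ExtendsTo ι N NF ∧ p ∈ NF ∧ saDim N = d}

/-- `f` is a continuous semialgebraic function on `M`. -/
def IsSAFunOn {n : ℕ} (M : Set (Fin n → R)) (f : (Fin n → R) → R) : Prop :=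
  ContinuousOn f M ∧ IsSemialgebraic (graphOn M f)

/-- The carrier of the ring `S(M,R)` (`star = false`), resp. `S*(M,R)` (`star = true`);
functions are identified along `M` by the homomorphism predicates below. -/
def SAFunD {n : ℕ} (M : Set (Fin n → R)) (star : Bool) :=
  {f : (Fin n → R) → R // IsSAFunOn M f ∧ (star = true → ∃ r : R, ∀ x ∈ M, |f x| ≤ r)}

/-- `φ` is an `R`-algebra homomorphism `S⋄(M,R) → F` (with `R → F` given by `ι`). -/
def IsSAAlgHomOn {n : ℕ} (ι : R →+* F) (M : Set (Fin n → R)) (star : Bool)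
    (φ : SAFunD M star → F) : Prop :=
  (∀ f g : SAFunD M star, (∀ x ∈ M, f.1 x = g.1 x) → φ f = φ g) ∧
  (∀ f g h : SAFunD M star, (∀ x ∈ M, h.1 x = f.1 x + g.1 x) → φ h = φ f + φ g) ∧
  (∀ f g h : SAFunD M star, (∀ x ∈ M, h.1 x = f.1 x * g.1 x) → φ h = φ f * φ g) ∧
  (∀ (r : R) (c : SAFunD M star), (∀ x ∈ M, c.1 x = r) → φ c = ι r)

/-- The core of `φ` is `p`: `φ` maps the `i`-th coordinate projection to `p i`. -/
def CoreEq {n : ℕ} (ι : R →+* F) (M : Set (Fin n → R)) (star : Bool)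
    (φ : SAFunD M star → F) (p : Fin n → F) : Prop :=
  ∀ i : Fin n, ∃ f : SAFunD M star, (∀ x ∈ M, f.1 x = x i) ∧ φ f = p i

/-- The graph over `N ⊆ R^n` of a map into `R^m`, inside `R^(n+m)`. -/
def graphMapOn {n m : ℕ} (N : Set (Fin n → R)) (h : (Fin n → R) → (Fin m → R)) :
    Set (Fin (n + m) → R) :=
  {z | (fun i : Fin n => z (Fin.castAdd m i)) ∈ N ∧
    (fun i : Fin m => z (Fin.natAdd n i)) = h (fun i : Fin n => z (Fin.castAdd m i))}

/-- `h` is a continuous semialgebraic map on `N`. -/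
def IsSAMapOn {n m : ℕ} (N : Set (Fin n → R)) (h : (Fin n → R) → (Fin m → R)) : Prop :=
  ContinuousOn h N ∧ IsSemialgebraic (graphMapOn N h)

/-- `P` is a prime ideal of `S⋄(M,R)`, phrased via pointwise identities on `M`. -/
def IsPrimeIdealOn {n : ℕ} (M : Set (Fin n → R)) (star : Bool)
    (P : Set (SAFunD M star)) : Prop :=
  (∀ f g : SAFunD M star, (∀ x ∈ M, f.1 x = g.1 x) → (f ∈ P ↔ g ∈ P)) ∧
  (∀ f : SAFunD M star, (∀ x ∈ M, f.1 x = 0) → f ∈ P) ∧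
  (∀ f g h : SAFunD M star, (∀ x ∈ M, h.1 x = f.1 x + g.1 x) → f ∈ P → g ∈ P → h ∈ P) ∧
  (∀ f g h : SAFunD M star, (∀ x ∈ M, h.1 x = f.1 x * g.1 x) → f ∈ P → h ∈ P) ∧
  (∀ f : SAFunD M star, (∀ x ∈ M, f.1 x = 1) → f ∉ P) ∧
  (∀ f g h : SAFunD M star, (∀ x ∈ M, h.1 x = f.1 x * g.1 x) → h ∈ P → f ∈ P ∨ g ∈ P)

/-- `(X, j)` is a semialgebraic pseudo-compactification of `M`: `X` is closed, bounded
and semialgebraic, and `j` is a semialgebraic embedding of `M` into `X` with dense image. -/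
def IsSAPseudoCompactification {n m : ℕ} (M : Set (Fin n → R)) (X : Set (Fin m → R))
    (j : (Fin n → R) → (Fin m → R)) : Prop :=
  IsSemialgebraic X ∧ IsClosed X ∧ BoundedSet X ∧
  IsSAMapOn M j ∧ Set.InjOn j M ∧ (∀ x ∈ M, j x ∈ X) ∧
  (∃ j' : (Fin m → R) → (Fin n → R), ContinuousOn j' (j '' M) ∧ ∀ x ∈ M, j' (j x) = x) ∧
  X ⊆ closure (j '' M)

end Topological

section Simplices

variable {R : Type*} [Field R] [LinearOrder R] [IsStrictOrderedRing R]

/-- The nonnegative square root, when it exists (junk value `0` otherwise). -/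
noncomputable def rsqrt (x : R) : R :=
  open Classical in
  if h : ∃ y : R, 0 ≤ y ∧ y * y = x then h.choose else 0

/-- Sum of squares of the coordinates. -/
def sqnorm {ι : Type*} [Fintype ι] (x : ι → R) : R := ∑ i, x i * x i

/-- Euclidean distance. -/
noncomputable def rdist {ι : Type*} [Fintype ι] (x y : ι → R) : R := rsqrt (sqnorm (x - y))

/-- Distance from a point to a set: the greatest lower bound of distances, when it
exists (junk value `0` otherwise). -/
noncomputable def glbDist {α : Type*} (d : α → α → R) (x : α) (S : Set α) : R :=
  open Classical in
  if h : ∃ r : R, IsGLB (d x '' S) r then h.choose else 0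

/-- The closed set `Ū_{τ,ε} = {z : dist(z,τ) ≤ ε · dist(z,B)}` (with `B = ∂τ`). -/
def UbarSet {ι : Type*} [Fintype ι] (τ B : Set (ι → R)) (ε : R) : Set (ι → R) :=
  {z | glbDist rdist z τ ≤ ε * glbDist rdist z B}

/-- Euclidean distance on a product `R^ι × R^κ`. -/
noncomputable def prodDist {ι κ : Type*} [Fintype ι] [Fintype κ]
    (a b : (ι → R) × (κ → R)) : R :=
  rsqrt (sqnorm (a.1 - b.1) + sqnorm (a.2 - b.2))

/-- The simplex spanned by the vertices `v`. -/
def simplexHull (K : Type*) [Field K] [LinearOrder K] [IsStrictOrderedRing K] {k m : ℕ}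
    (v : Fin k → (Fin m → K)) : Set (Fin m → K) :=
  convexHull K (Set.range v)

/-- The facet of the simplex opposite to the vertex `v i`. -/
def facetOf (K : Type*) [Field K] [LinearOrder K] [IsStrictOrderedRing K] {k m : ℕ}
    (v : Fin k → (Fin m → K)) (i : Fin k) : Set (Fin m → K) :=
  convexHull K (v '' ({i} : Set (Fin k))ᶜ)

/-- The boundary of the simplex: the union of its facets. -/
def simplexBoundary (K : Type*) [Field K] [LinearOrder K] [IsStrictOrderedRing K] {k m : ℕ}
    (v : Fin k → (Fin m → K)) : Set (Fin m → K) :=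
  ⋃ i, facetOf K v i

/-- The face of the simplex spanned by the vertices in `s`. -/
def faceOf (K : Type*) [Field K] [LinearOrder K] [IsStrictOrderedRing K] {k m : ℕ}
    (v : Fin k → (Fin m → K)) (s : Set (Fin k)) : Set (Fin m → K) :=
  convexHull K (v '' s)

/-- The boundary of the face spanned by the vertices in `s`. -/
def faceBoundaryOf (K : Type*) [Field K] [LinearOrder K] [IsStrictOrderedRing K] {k m : ℕ}
    (v : Fin k → (Fin m → K)) (s : Set (Fin k)) : Set (Fin m → K) :=
  ⋃ i ∈ s, faceOf K v (s \ {i})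

/-- `p` is the incenter of the simplex with vertices `v`: it lies in the simplex and is
equidistant from all facets. -/
def IsIncenterOf (K : Type*) [Field K] [LinearOrder K] [IsStrictOrderedRing K] {k m : ℕ}
    (v : Fin (k + 1) → (Fin m → K)) (p : Fin m → K) : Prop :=
  p ∈ simplexHull K v ∧
    ∀ i, glbDist rdist p (facetOf K v i) = glbDist rdist p (facetOf K v 0)

/-- The closed half-space of the affine subspace generated by `L` and `p`, determined
by `L` and containing `p`. -/
def halfspacePlus (K : Type*) [Field K] [LinearOrder K] [IsStrictOrderedRing K] {E : Type*} [AddCommGroup E]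
    [Module K E] (L : Set E) (p : E) : Set E :=
  {z | ∃ l ∈ L, ∃ l' ∈ L, ∃ t : K, 0 ≤ t ∧ z = l + t • (p - l')}

/-- The open tube `U_{τ,ε}` around `τ × {0}` inside `R^d × R^m`. -/
def tubeOpen {K : Type*} [Field K] [LinearOrder K] [IsStrictOrderedRing K] {d : ℕ} (m : ℕ)
    (τ B : Set (Fin d → K)) (ε : K) : Set ((Fin d → K) × (Fin m → K)) :=
  {z | glbDist prodDist z ((fun x => (x, (0 : Fin m → K))) '' τ) <
    ε * glbDist prodDist z ((fun x => (x, (0 : Fin m → K))) '' B)}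

/-- The closed tube `Ū_{τ,ε}` around `τ × {0}` inside `R^d × R^m`. -/
def tubeClosed {K : Type*} [Field K] [LinearOrder K] [IsStrictOrderedRing K] {d : ℕ} (m : ℕ)
    (τ B : Set (Fin d → K)) (ε : K) : Set ((Fin d → K) × (Fin m → K)) :=
  {z | glbDist prodDist z ((fun x => (x, (0 : Fin m → K))) '' τ) ≤
    ε * glbDist prodDist z ((fun x => (x, (0 : Fin m → K))) '' B)}

/-- The cone in `R^d × R` with base `τ × {0}` and apex `vert`. -/
def coneHat (K : Type*) [Field K] [LinearOrder K] [IsStrictOrderedRing K] {d : ℕ} (τ : Set (Fin d → K))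
    (vert : (Fin d → K) × K) : Set ((Fin d → K) × K) :=
  convexHull K ((fun x => (x, (0 : K))) '' τ ∪ {vert})

end Simplices

section AuxBasic

variable {R : Type*} [Field R] [LinearOrder R] [IsStrictOrderedRing R]

theorem sot_rsqrt_nonneg (x : R) : 0 ≤ rsqrt x := by
  unfold rsqrt
  split
  · next h => exact h.choose_spec.1
  · exact le_refl 0

theorem sot_rsqrt_sq (hR : IsRealClosedField R) {x : R} (hx : 0 ≤ x) :
    rsqrt x * rsqrt x = x := by
  have h : ∃ y : R, 0 ≤ y ∧ y * y = x := by
    obtain ⟨y, hy⟩ := hR.1 x hx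
    exact ⟨|y|, abs_nonneg y, by rw [abs_mul_abs_self]; exact hy⟩
  unfold rsqrt
  rw [dif_pos h]
  exact h.choose_spec.2

theorem sot_sq_le {a b : R} (hb : 0 ≤ b) (h : a * a ≤ b * b) : a ≤ b := by nlinarith

theorem sot_sq_eq {a b : R} (ha : 0 ≤ a) (hb : 0 ≤ b) (h : a * a = b * b) : a = b :=
  le_antisymm (sot_sq_le hb h.le) (sot_sq_le ha h.ge)

theorem sot_rsqrt_eq {x a : R} (ha : 0 ≤ a) (h : a * a = x) : rsqrt x = a := by
  have hex : ∃ y : R, 0 ≤ y ∧ y * y = x := ⟨a, ha, h⟩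
  unfold rsqrt
  rw [dif_pos hex]
  exact sot_sq_eq hex.choose_spec.1 ha (by rw [hex.choose_spec.2, ← h])

theorem sot_rsqrt_mono (hR : IsRealClosedField R) {x y : R} (hx : 0 ≤ x) (hxy : x ≤ y) :
    rsqrt x ≤ rsqrt y :=
  sot_sq_le (sot_rsqrt_nonneg y)
    (by rw [sot_rsqrt_sq hR hx, sot_rsqrt_sq hR (hx.trans hxy)]; exact hxy)

variable {ι : Type*} [Fintype ι]

theorem sot_sqnorm_nonneg (x : ι → R) : 0 ≤ sqnorm x :=
  Finset.sum_nonneg fun i _ => mul_self_nonneg _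

theorem sot_sqnorm_eq_zero {x : ι → R} (h : sqnorm x = 0) : x = 0 := by
  funext i
  have := (Finset.sum_eq_zero_iff_of_nonneg (fun i _ => mul_self_nonneg (x i))).1 h i
    (Finset.mem_univ i)
  exact mul_self_eq_zero.1 this

theorem sot_sqnorm_smul (s : R) (v : ι → R) : sqnorm (s • v) = s * s * sqnorm v := by
  unfold sqnorm
  rw [Finset.mul_sum]
  refine Finset.sum_congr rfl fun i _ => ?_
  simp only [Pi.smul_apply, smul_eq_mul]
  ring

/-- dot product -/
def sot_dot (x y : ι → R) : R := ∑ i, x i * y i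

theorem sot_sqnorm_add (u v : ι → R) :
    sqnorm (u + v) = sqnorm u + 2 * sot_dot u v + sqnorm v := by
  unfold sqnorm sot_dot
  rw [Finset.mul_sum, ← Finset.sum_add_distrib, ← Finset.sum_add_distrib]
  exact Finset.sum_congr rfl fun i _ => by simp only [Pi.add_apply]; ring

theorem sot_dot_smul_right (u v : ι → R) (c : R) : sot_dot u (c • v) = c * sot_dot u v := by
  unfold sot_dot
  rw [Finset.mul_sum]
  exact Finset.sum_congr rfl fun i _ => by simp only [Pi.smul_apply, smul_eq_mul]; ring

theorem sot_key_expand (zp px : ι → R) (c : R) (h : sot_dot zp px = 0) :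
    sqnorm (zp + c • px) = sqnorm zp + c * c * sqnorm px := by
  rw [sot_sqnorm_add, sot_dot_smul_right, h, mul_zero, mul_zero, sot_sqnorm_smul, add_zero]

theorem sot_dot_le (hR : IsRealClosedField R) (u v : ι → R) :
    sot_dot u v ≤ rsqrt (sqnorm u) * rsqrt (sqnorm v) := by
  have h2 : sot_dot u v * sot_dot u v ≤ sqnorm u * sqnorm v := by
    have h := Finset.sum_mul_sq_le_sq_mul_sq Finset.univ u v
    simpa [pow_two, sqnorm, sot_dot] using h
  have ha0 : 0 ≤ rsqrt (sqnorm u) * rsqrt (sqnorm v) :=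
    mul_nonneg (sot_rsqrt_nonneg _) (sot_rsqrt_nonneg _)
  refine sot_sq_le ha0 ?_
  calc sot_dot u v * sot_dot u v ≤ sqnorm u * sqnorm v := h2
    _ = rsqrt (sqnorm u) * rsqrt (sqnorm v) * (rsqrt (sqnorm u) * rsqrt (sqnorm v)) := by
        rw [mul_mul_mul_comm, sot_rsqrt_sq hR (sot_sqnorm_nonneg u),
          sot_rsqrt_sq hR (sot_sqnorm_nonneg v)]

theorem sot_rdist_nonneg (x y : ι → R) : 0 ≤ rdist x y := sot_rsqrt_nonneg _

theorem sot_rdist_eq_zero (hR : IsRealClosedField R) {x y : ι → R} (h : rdist x y = 0) :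
    x = y := by
  have h2 := sot_rsqrt_sq hR (sot_sqnorm_nonneg (x - y))
  unfold rdist at h
  rw [h, mul_zero] at h2
  have := sot_sqnorm_eq_zero h2.symm
  exact sub_eq_zero.1 this

theorem sot_rdist_triangle (hR : IsRealClosedField R) (x y z : ι → R) :
    rdist x z ≤ rdist x y + rdist y z := by
  unfold rdist
  have hxz : x - z = (x - y) + (y - z) := by abel
  rw [hxz]
  set u := x - y
  set v := y - z
  have hS : 0 ≤ rsqrt (sqnorm u) + rsqrt (sqnorm v) :=
    add_nonneg (sot_rsqrt_nonneg _) (sot_rsqrt_nonneg _)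
  refine sot_sq_le hS ?_
  have h1 := sot_rsqrt_sq hR (sot_sqnorm_nonneg (u + v))
  have h2 := sot_rsqrt_sq hR (sot_sqnorm_nonneg u)
  have h3 := sot_rsqrt_sq hR (sot_sqnorm_nonneg v)
  have h4 := sot_dot_le hR u v
  rw [h1, sot_sqnorm_add]
  nlinarith [h4]

theorem sot_rdist_smul_sub (hR : IsRealClosedField R) {s : R} (hs : 0 ≤ s) (u : ι → R) :
    rsqrt (sqnorm (s • u)) = s * rsqrt (sqnorm u) := by
  rw [sot_sqnorm_smul]
  refine sot_rsqrt_eq (mul_nonneg hs (sot_rsqrt_nonneg _)) ?_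
  have := sot_rsqrt_sq hR (sot_sqnorm_nonneg u)
  nlinarith [this]

theorem sot_rdist_seg (hR : IsRealClosedField R) {s : R} (hs : 0 ≤ s) (z a : ι → R) :
    rdist (a + s • (z - a)) a = s * rdist z a := by
  unfold rdist
  have h : a + s • (z - a) - a = s • (z - a) := by abel
  rw [h, sot_rdist_smul_sub hR hs]

theorem sot_rdist_seg' (hR : IsRealClosedField R) {s : R} (hs : s ≤ 1) (z a : ι → R) :
    rdist z (a + s • (z - a)) = (1 - s) * rdist z a := by
  unfold rdist
  have h : z - (a + s • (z - a)) = (1 - s) • (z - a) := by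
    rw [sub_smul, one_smul]; abel
  rw [h, sot_rdist_smul_sub hR (by linarith)]

section GLB

variable {α : Type*} (d : α → α → R) (x : α)

theorem sot_glbDist_nonneg {S : Set α} (hd : ∀ y, 0 ≤ d x y) : 0 ≤ glbDist d x S := by
  unfold glbDist
  split
  · next h =>
    refine h.choose_spec.2 fun b hb => ?_
    obtain ⟨y, _, rfl⟩ := hb
    exact hd y
  · exact le_refl 0

theorem sot_glbDist_le {S : Set α} {a : α} (ha : a ∈ S) (hd : ∀ y, 0 ≤ d x y) :
    glbDist d x S ≤ d x a := by
  unfold glbDist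
  split
  · next h => exact h.choose_spec.1 ⟨a, ha, rfl⟩
  · exact hd a

theorem sot_glbDist_eq {S : Set α} {a : α} (ha : a ∈ S) (hmin : ∀ y ∈ S, d x a ≤ d x y) :
    glbDist d x S = d x a := by
  have hg : IsGLB (d x '' S) (d x a) := by
    constructor
    · rintro b ⟨y, hy, rfl⟩
      exact hmin y hy
    · exact fun c hc => hc ⟨a, ha, rfl⟩
  have hex : ∃ r, IsGLB (d x '' S) r := ⟨_, hg⟩
  unfold glbDist
  rw [dif_pos hex]
  exact hex.choose_spec.unique hg

theorem sot_glbDist_lb' {S : Set α} {y : α} (hy : y ∈ S) :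
    glbDist d x S ≤ d x y ∨ glbDist d x S = 0 := by
  unfold glbDist
  split
  · next h => exact Or.inl (h.choose_spec.1 ⟨y, hy, rfl⟩)
  · exact Or.inr rfl

theorem sot_glbDist_empty : glbDist d x (∅ : Set α) = 0 := by
  unfold glbDist
  rw [dif_neg]
  rintro ⟨r, hr⟩
  have h1 : r + 1 ∈ lowerBounds (d x '' (∅ : Set α)) := by
    rintro b ⟨y, hy, rfl⟩
    exact absurd hy (Set.notMem_empty y)
  have := hr.2 h1
  linarith

end GLB

end AuxBasic
section AuxProj

variable {R : Type*} [Field R] [LinearOrder R] [IsStrictOrderedRing R] {ι : Type*} [Fintype ι]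

theorem sot_dot_comm (u v : ι → R) : sot_dot u v = sot_dot v u :=
  Finset.sum_congr rfl fun i _ => mul_comm _ _

theorem sot_dot_neg_right (u v : ι → R) : sot_dot u (-v) = -sot_dot u v := by
  unfold sot_dot
  rw [← Finset.sum_neg_distrib]
  exact Finset.sum_congr rfl fun i _ => by simp

/-- the dot-product bilinear form -/
def sot_bil : LinearMap.BilinForm R (ι → R) :=
  LinearMap.mk₂ R (fun x y => ∑ i, x i * y i)
    (fun m₁ m₂ n => by simp [add_mul, Finset.sum_add_distrib])
    (fun c m n => by simp [Finset.mul_sum, mul_assoc])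
    (fun m n₁ n₂ => by simp [mul_add, Finset.sum_add_distrib])
    (fun c m n => by simp [Finset.mul_sum]; ring_nf; simp [mul_assoc, mul_comm, mul_left_comm])

theorem sot_bil_apply (x y : ι → R) : sot_bil x y = sot_dot x y := rfl

theorem sot_bil_refl : (sot_bil (R := R) (ι := ι)).IsRefl := by
  intro x y h
  rw [sot_bil_apply, sot_dot_comm]
  exact h

theorem sot_proj (t : Finset (ι → R)) (ht : t.Nonempty) (z : ι → R) :
    ∃ π ∈ affineSpan R (t : Set (ι → R)),
      ∀ x ∈ affineSpan R (t : Set (ι → R)), sot_dot (z - π) (x - π) = 0 := by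
  classical
  obtain ⟨a0, ha0⟩ := ht
  set W : Submodule R (ι → R) := vectorSpan R (t : Set (ι → R)) with hW
  have hnd : (sot_bil.restrict W).Nondegenerate := by
    refine ⟨?_, ?_⟩
    all_goals
      rintro ⟨v, hv⟩ h
      have h2 := h ⟨v, hv⟩
      rw [LinearMap.BilinForm.restrict_apply] at h2
      have h3 : sqnorm v = 0 := h2
      exact Subtype.ext (sot_sqnorm_eq_zero h3)
  have hcompl := LinearMap.BilinForm.isCompl_orthogonal_of_restrict_nondegenerate
    sot_bil_refl hnd
  have hz : z - a0 ∈ W ⊔ sot_bil.orthogonal W := by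
    rw [hcompl.sup_eq_top]; exact Submodule.mem_top
  obtain ⟨w, hw, w', hw', hsum⟩ := Submodule.mem_sup.1 hz
  have ha0' : a0 ∈ affineSpan R (t : Set (ι → R)) :=
    subset_affineSpan R _ (Finset.mem_coe.2 ha0)
  have hwd : w ∈ (affineSpan R (t : Set (ι → R))).direction := by
    rw [direction_affineSpan]; exact hw
  have hπmem : a0 + w ∈ affineSpan R (t : Set (ι → R)) := by
    have := AffineSubspace.vadd_mem_of_mem_direction hwd ha0'
    rwa [vadd_eq_add, add_comm] at this
  refine ⟨a0 + w, hπmem, fun x hx => ?_⟩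
  have hxW : x - (a0 + w) ∈ W := by
    have := AffineSubspace.vsub_mem_direction hx hπmem
    rwa [direction_affineSpan, vsub_eq_sub] at this
  have hzw : z - (a0 + w) = w' := by rw [eq_sub_of_add_eq' hsum]; abel
  rw [hzw, sot_dot_comm]
  have h0 : sot_bil (x - (a0 + w)) w' = 0 :=
    (LinearMap.BilinForm.mem_orthogonal_iff.1 hw') _ hxW
  exact h0

theorem sot_span_rep (t : Finset (ι → R)) {x : ι → R}
    (hx : x ∈ affineSpan R (t : Set (ι → R))) :
    ∃ ν : (ι → R) → R, ∑ u ∈ t, ν u = 1 ∧ ∑ u ∈ t, ν u • u = x := by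
  classical
  let S : AffineSubspace R (ι → R) :=
    { carrier := {y | ∃ ν : (ι → R) → R, ∑ u ∈ t, ν u = 1 ∧ ∑ u ∈ t, ν u • u = y}
      smul_vsub_vadd_mem' := by
        intro c p1 p2 p3 h1 h2 h3
        obtain ⟨ν1, hν11, hν12⟩ := h1
        obtain ⟨ν2, hν21, hν22⟩ := h2
        obtain ⟨ν3, hν31, hν32⟩ := h3
        refine ⟨fun u => c * ν1 u - c * ν2 u + ν3 u, ?_, ?_⟩
        · rw [Finset.sum_add_distrib, Finset.sum_sub_distrib, ← Finset.mul_sum,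
            ← Finset.mul_sum, hν11, hν21, hν31]
          ring
        · have he : ∑ u ∈ t, (c * ν1 u - c * ν2 u + ν3 u) • u
              = c • (∑ u ∈ t, ν1 u • u) - c • (∑ u ∈ t, ν2 u • u) + ∑ u ∈ t, ν3 u • u := by
            rw [Finset.smul_sum, Finset.smul_sum, ← Finset.sum_sub_distrib,
              ← Finset.sum_add_distrib]
            refine Finset.sum_congr rfl fun u _ => ?_
            rw [add_smul, sub_smul, mul_smul, mul_smul]
          rw [he, hν12, hν22, hν32]
          simp only [vsub_eq_sub, vadd_eq_add, smul_sub]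
          try abel }
  have hsub : affineSpan R (t : Set (ι → R)) ≤ S := by
    rw [affineSpan_le]
    intro u hu
    refine ⟨fun v => if v = u then 1 else 0, ?_, ?_⟩
    · rw [Finset.sum_ite_eq' t u (fun _ => (1 : R))]
      simp [Finset.mem_coe.1 hu]
    · have : ∀ v ∈ t, (if v = u then (1 : R) else 0) • v = if v = u then v else 0 := by
        intro v _; split <;> simp_all
      rw [Finset.sum_congr rfl this, Finset.sum_ite_eq' t u (fun v => v)]
      simp [Finset.mem_coe.1 hu]
  exact hsub hx

theorem sot_np (t : Finset (ι → R)) (ht : t.Nonempty) (z : ι → R) :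
    ∃ a ∈ convexHull R (t : Set (ι → R)),
      ∀ x ∈ convexHull R (t : Set (ι → R)), sqnorm (z - a) ≤ sqnorm (z - x) := by
  classical
  suffices h : ∀ (N : ℕ) (t : Finset (ι → R)), t.card ≤ N → t.Nonempty →
      ∀ z : ι → R, ∃ a ∈ convexHull R (t : Set (ι → R)),
        ∀ x ∈ convexHull R (t : Set (ι → R)), sqnorm (z - a) ≤ sqnorm (z - x) from
    h t.card t le_rfl ht z
  intro N
  induction N with
  | zero =>
    intro t hc ht z
    have := Finset.card_pos.2 ht
    omega
  | succ N ih =>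
    intro t hc ht z
    obtain ⟨π, hπs, hπo⟩ := sot_proj t ht z
    by_cases hπ : π ∈ convexHull R (t : Set (ι → R))
    · refine ⟨π, hπ, fun x hx => ?_⟩
      have hxs : x ∈ affineSpan R (t : Set (ι → R)) := convexHull_subset_affineSpan _ hx
      have hdot : sot_dot (z - π) (π - x) = 0 := by
        rw [show π - x = -(x - π) by abel, sot_dot_neg_right, hπo x hxs, neg_zero]
      have e2 : z - x = (z - π) + (1 : R) • (π - x) := by rw [one_smul]; abel
      rw [e2, sot_key_expand _ _ _ hdot]
      nlinarith [sot_sqnorm_nonneg (π - x)]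
    · obtain ⟨ν, hν1, hνx⟩ := sot_span_rep t hπs
      set I := t.filter (fun u => ν u < 0) with hIdef
      have hIne : I.Nonempty := by
        by_contra hIe
        apply hπ
        have hn : ∀ u ∈ t, 0 ≤ ν u := by
          intro u hu
          by_contra hc'
          exact hIe ⟨u, Finset.mem_filter.2 ⟨hu, lt_of_not_ge hc'⟩⟩
        have hcm : π = t.centerMass ν id := by
          rw [Finset.centerMass, hν1, inv_one, one_smul]
          simp only [id]
          exact hνx.symm
        rw [hcm]
        exact Finset.centerMass_id_mem_convexHull t hn (by rw [hν1]; exact one_pos)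
      have hIH : ∀ u ∈ I, ∃ a ∈ convexHull R ((t.erase u : Finset _) : Set (ι → R)),
          ∀ x ∈ convexHull R ((t.erase u : Finset _) : Set (ι → R)),
            sqnorm (z - a) ≤ sqnorm (z - x) := by
        intro u hu
        have hut : u ∈ t := (Finset.mem_filter.1 hu).1
        have hνu : ν u < 0 := (Finset.mem_filter.1 hu).2
        have h2 : ∃ u2 ∈ t, 0 < ν u2 := by
          by_contra h
          push_neg at h
          have : ∑ u ∈ t, ν u ≤ 0 := Finset.sum_nonpos h
          rw [hν1] at this; linarith
        obtain ⟨u2, hu2, hν2⟩ := h2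
        have hne : (t.erase u).Nonempty :=
          ⟨u2, Finset.mem_erase.2 ⟨fun he => by rw [he] at hν2; linarith, hu2⟩⟩
        have hcard : (t.erase u).card ≤ N := by
          rw [Finset.card_erase_of_mem hut]
          have := Finset.card_pos.2 ht
          omega
        exact ih (t.erase u) hcard hne z
      choose! g hg1 hg2 using hIH
      obtain ⟨u0, hu0I, hu0min⟩ := I.exists_min_image (fun u => sqnorm (z - g u)) hIne
      refine ⟨g u0, ?_, ?_⟩
      · exact convexHull_mono (Finset.coe_subset.2 (Finset.erase_subset _ _)) (hg1 u0 hu0I)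
      · intro x hx
        have hx0 := hx
        rw [Finset.convexHull_eq] at hx
        obtain ⟨lam, hlam0, hlam1, hlamx⟩ := hx
        have hxval : ∑ u ∈ t, lam u • u = x := by
          rw [← hlamx, Finset.centerMass, hlam1, inv_one, one_smul]
          simp only [id]
        obtain ⟨u1, hu1I, hu1min⟩ := I.exists_min_image (fun u => lam u / (lam u - ν u)) hIne
        have hu1t : u1 ∈ t := (Finset.mem_filter.1 hu1I).1
        have hνu1 : ν u1 < 0 := (Finset.mem_filter.1 hu1I).2
        have hden : (0 : R) < lam u1 - ν u1 := by
          have := hlam0 u1 hu1t; linarith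
        set s := lam u1 / (lam u1 - ν u1) with hs
        have hs0 : 0 ≤ s := div_nonneg (hlam0 u1 hu1t) hden.le
        have hs1 : s < 1 := by
          rw [hs, div_lt_one hden]; linarith
        set μ : (ι → R) → R := fun u => (1 - s) * lam u + s * ν u with hμ
        have hμ0 : ∀ u ∈ t, 0 ≤ μ u := by
          intro u hut
          by_cases hu : u ∈ I
          · have hνu' : ν u < 0 := (Finset.mem_filter.1 hu).2
            have hdenu : (0 : R) < lam u - ν u := by have := hlam0 u hut; linarith
            have hsu : s ≤ lam u / (lam u - ν u) := hu1min u hu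
            have h5 : s * (lam u - ν u) ≤ lam u := (le_div_iff₀ hdenu).1 hsu
            have : μ u = lam u - s * (lam u - ν u) := by rw [hμ]; ring
            linarith
          · have hν0 : 0 ≤ ν u := by
              by_contra hcc
              exact hu (Finset.mem_filter.2 ⟨hut, lt_of_not_ge fun c => hcc (by linarith)⟩)
            have := hlam0 u hut
            have h1s : 0 ≤ 1 - s := by linarith
            positivity
        have hμu1 : μ u1 = 0 := by
          have he : μ u1 = lam u1 - s * (lam u1 - ν u1) := by rw [hμ]; ring
          rw [he, hs, div_mul_cancel₀ _ hden.ne']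
          ring
        have hμsum : ∑ u ∈ t, μ u = 1 := by
          rw [hμ]
          rw [Finset.sum_add_distrib, ← Finset.mul_sum, ← Finset.mul_sum, hν1, hlam1]
          ring
        set xs := ∑ u ∈ t, μ u • u with hxs
        have hxsval : xs = x + s • (π - x) := by
          have he1 : xs = ∑ u ∈ t, ((1 - s) • (lam u • u) + s • (ν u • u)) := by
            rw [hxs]
            refine Finset.sum_congr rfl fun u _ => ?_
            rw [hμ, add_smul, mul_smul, mul_smul]
          rw [he1, Finset.sum_add_distrib, ← Finset.smul_sum, ← Finset.smul_sum, hxval, hνx,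
            smul_sub, sub_smul, one_smul]
          abel
        have hxmem : xs ∈ convexHull R ((t.erase u1 : Finset _) : Set (ι → R)) := by
          have hsum' : ∑ u ∈ t.erase u1, μ u = 1 := by
            rw [Finset.sum_erase _ hμu1, hμsum]
          have hcc : (t.erase u1).centerMass μ id = xs := by
            rw [Finset.centerMass, hsum', inv_one, one_smul, hxs]
            simp only [id]
            exact Finset.sum_erase _ (by rw [hμu1, zero_smul])
          rw [← hcc]
          exact Finset.centerMass_id_mem_convexHull _
            (fun u hu => hμ0 u (Finset.mem_of_mem_erase hu)) (by rw [hsum']; exact one_pos)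
        have hdot : sot_dot (z - π) (π - x) = 0 := by
          have hxspan : x ∈ affineSpan R (t : Set (ι → R)) := convexHull_subset_affineSpan _ hx0
          rw [show π - x = -(x - π) by abel, sot_dot_neg_right, hπo x hxspan, neg_zero]
        have hdist1 : sqnorm (z - xs) ≤ sqnorm (z - x) := by
          have e1 : z - xs = (z - π) + (1 - s) • (π - x) := by
            rw [hxsval, sub_smul, one_smul]; abel
          have e2 : z - x = (z - π) + (1 : R) • (π - x) := by rw [one_smul]; abel
          rw [e1, e2, sot_key_expand _ _ _ hdot, sot_key_expand _ _ _ hdot]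
          have h1s : 0 ≤ 1 - s := by linarith
          nlinarith [sot_sqnorm_nonneg (π - x),
            mul_nonneg (mul_nonneg hs0 h1s) (sot_sqnorm_nonneg (π - x)),
            mul_nonneg hs0 (sot_sqnorm_nonneg (π - x))]
        have hdist2 : sqnorm (z - g u1) ≤ sqnorm (z - xs) := hg2 u1 hu1I xs hxmem
        have hdist3 : sqnorm (z - g u0) ≤ sqnorm (z - g u1) := hu0min u1 hu1I
        linarith

end AuxProj
section AuxGeom

variable {R : Type*} [Field R] [LinearOrder R] [IsStrictOrderedRing R] {ι : Type*} [Fintype ι]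

theorem sot_np_rdist (hR : IsRealClosedField R) (t : Finset (ι → R)) (ht : t.Nonempty)
    (z : ι → R) :
    ∃ a ∈ convexHull R (t : Set (ι → R)),
      ∀ x ∈ convexHull R (t : Set (ι → R)), rdist z a ≤ rdist z x := by
  obtain ⟨a, ha, hmin⟩ := sot_np t ht z
  refine ⟨a, ha, fun x hx => ?_⟩
  show rsqrt (sqnorm (z - a)) ≤ rsqrt (sqnorm (z - x))
  exact sot_rsqrt_mono hR (sot_sqnorm_nonneg _) (hmin x hx)

theorem sot_min_union {κ : Type*} (z : ι → R) (s : Finset κ) (T : κ → Set (ι → R))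
    (h : ∀ j ∈ s, T j = ∅ ∨ ∃ a ∈ T j, ∀ x ∈ T j, rdist z a ≤ rdist z x)
    (hne : (⋃ j ∈ s, T j).Nonempty) :
    ∃ a ∈ ⋃ j ∈ s, T j, ∀ x ∈ ⋃ j ∈ s, T j, rdist z a ≤ rdist z x := by
  classical
  induction s using Finset.induction with
  | empty => simp at hne
  | @insert j s hj ih =>
    have hrest : ∀ j' ∈ s, T j' = ∅ ∨ ∃ a ∈ T j', ∀ x ∈ T j', rdist z a ≤ rdist z x :=
      fun j' hj' => h j' (Finset.mem_insert_of_mem hj')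
    rw [Finset.set_biUnion_insert] at hne ⊢
    rcases h j (Finset.mem_insert_self j s) with hTe | ⟨b, hb, hbmin⟩
    · rw [hTe, Set.empty_union] at hne ⊢
      exact ih hrest hne
    · by_cases hU : (⋃ j' ∈ s, T j').Nonempty
      · obtain ⟨a, ha, hamin⟩ := ih hrest hU
        by_cases hcmp : rdist z a ≤ rdist z b
        · refine ⟨a, Set.mem_union_right _ ha, fun x hx => ?_⟩
          rcases hx with hx | hx
          · exact le_trans hcmp (hbmin x hx)
          · exact hamin x hx
        · refine ⟨b, Set.mem_union_left _ hb, fun x hx => ?_⟩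
          rcases hx with hx | hx
          · exact hbmin x hx
          · exact le_trans (le_of_not_ge hcmp) (hamin x hx)
      · have hUe : (⋃ j' ∈ s, T j') = ∅ := Set.not_nonempty_iff_eq_empty.1 hU
        rw [hUe, Set.union_empty]
        exact ⟨b, hb, hbmin⟩

end AuxGeom

section AuxSimplex

variable {R : Type*} [Field R] [LinearOrder R] [IsStrictOrderedRing R] {n : ℕ}

/-- The affine basis given by the vertices of an `n`-simplex in `R^n`. -/
noncomputable def sot_basis (w : Fin (n + 1) → (Fin n → R)) (hw : AffineIndependent R w) :
    AffineBasis (Fin (n + 1)) R (Fin n → R) :=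
  ⟨w, hw, hw.affineSpan_eq_top_iff_card_eq_finrank_add_one.2
    (by simp [Module.finrank_fin_fun])⟩

/-- Barycentric coordinates with respect to the vertices. -/
noncomputable def sot_coord (w : Fin (n + 1) → (Fin n → R)) (hw : AffineIndependent R w)
    (i : Fin (n + 1)) : (Fin n → R) →ᵃ[R] R :=
  (sot_basis w hw).coord i

variable (w : Fin (n + 1) → (Fin n → R)) (hw : AffineIndependent R w)

theorem sot_coe_basis : ⇑(sot_basis w hw) = w := rfl

theorem sot_coord_apply_eq (i : Fin (n + 1)) : sot_coord w hw i (w i) = 1 :=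
  (sot_basis w hw).coord_apply_eq i

theorem sot_coord_apply_ne {i j : Fin (n + 1)} (h : i ≠ j) : sot_coord w hw i (w j) = 0 :=
  (sot_basis w hw).coord_apply_ne h

theorem sot_sum_coord (x : Fin n → R) : ∑ i, sot_coord w hw i x = 1 :=
  (sot_basis w hw).sum_coord_apply_eq_one x

theorem sot_lincomb_coord (x : Fin n → R) : ∑ i, sot_coord w hw i x • w i = x :=
  (sot_basis w hw).linear_combination_coord_eq_self x

theorem sot_coord_ext {x y : Fin n → R} (h : ∀ i, sot_coord w hw i x = sot_coord w hw i y) :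
    x = y :=
  (sot_basis w hw).ext_elem h

theorem sot_coord_shift (f : (Fin n → R) →ᵃ[R] R) (x u v : Fin n → R) (s : R) :
    f (x + s • (u - v)) = f x + s * (f u - f v) := by
  have h : x + s • (u - v) = s • (u -ᵥ v) +ᵥ x := by
    rw [vsub_eq_sub, vadd_eq_add, add_comm]
  rw [h, AffineMap.map_vadd, LinearMap.map_smul, AffineMap.linearMap_vsub]
  simp only [vsub_eq_sub, vadd_eq_add, smul_eq_mul]
  ring

theorem sot_mem_face (s : Set (Fin (n + 1))) (x : Fin n → R) :
    x ∈ faceOf R w s ↔ (∀ i, 0 ≤ sot_coord w hw i x) ∧ ∀ i ∉ s, sot_coord w hw i x = 0 := by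
  constructor
  · intro hx
    have hsub : faceOf R w s ⊆
        {y | (∀ i, 0 ≤ sot_coord w hw i y) ∧ ∀ i ∉ s, sot_coord w hw i y = 0} := by
      apply convexHull_min
      · rintro y ⟨j, hj, rfl⟩
        constructor
        · intro i
          rcases eq_or_ne i j with rfl | hne
          · rw [sot_coord_apply_eq]; exact zero_le_one
          · rw [sot_coord_apply_ne w hw hne]
        · intro i hi
          exact sot_coord_apply_ne w hw fun he => hi (he ▸ hj)
      · rintro y ⟨hy1, hy2⟩ y' ⟨hy1', hy2'⟩ α β hα hβ hαβ
        have hcomb : α • y + β • y' = y + β • (y' - y) := by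
          rw [smul_sub, show α = 1 - β by linarith, sub_smul, one_smul]
          abel
        constructor
        · intro i
          rw [hcomb, sot_coord_shift]
          nlinarith [hy1 i, hy1' i]
        · intro i hi
          rw [hcomb, sot_coord_shift, hy2 i hi, hy2' i hi]
          ring
    exact hsub hx
  · rintro ⟨h0, hs⟩
    classical
    set s' : Finset (Fin (n + 1)) := Finset.univ.filter (· ∈ s) with hs'
    have hnotmem : ∀ i, i ∉ s' → sot_coord w hw i x = 0 := by
      intro i hi
      exact hs i (by simpa [hs'] using hi)
    have hsum' : ∑ i ∈ s', sot_coord w hw i x = 1 := by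
      rw [Finset.sum_subset (Finset.subset_univ s') (fun i _ hi => hnotmem i hi)]
      exact sot_sum_coord w hw x
    have hcm : s'.centerMass (fun i => sot_coord w hw i x) w = x := by
      rw [Finset.centerMass, hsum', inv_one, one_smul]
      rw [Finset.sum_subset (Finset.subset_univ s')
        (fun i _ hi => by rw [hnotmem i hi, zero_smul])]
      exact sot_lincomb_coord w hw x
    show x ∈ convexHull R (w '' s)
    rw [← hcm]
    exact Finset.centerMass_mem_convexHull s' (fun i _ => h0 i) (by rw [hsum']; exact one_pos)
      (fun i hi => ⟨i, by simpa [hs'] using hi, rfl⟩)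

theorem sot_mem_spanface {s : Set (Fin (n + 1))} (hs : s.Nonempty) (x : Fin n → R) :
    x ∈ affineSpan R (w '' s) ↔ ∀ i ∉ s, sot_coord w hw i x = 0 := by
  constructor
  · intro hx
    let Q : AffineSubspace R (Fin n → R) :=
      { carrier := {y | ∀ i ∉ s, sot_coord w hw i y = 0}
        smul_vsub_vadd_mem' := by
          intro c p1 p2 p3 h1 h2 h3 i hi
          have he : c • (p1 -ᵥ p2) +ᵥ p3 = p3 + c • (p1 - p2) := by
            rw [vsub_eq_sub, vadd_eq_add, add_comm]
          rw [he, sot_coord_shift, h1 i hi, h2 i hi, h3 i hi]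
          ring }
    have hsub : affineSpan R (w '' s) ≤ Q := by
      rw [affineSpan_le]
      rintro y ⟨j, hj, rfl⟩ i hi
      exact sot_coord_apply_ne w hw fun he => hi (he ▸ hj)
    exact hsub hx
  · intro hzero
    obtain ⟨i0, hi0⟩ := hs
    have hmem0 : w i0 ∈ affineSpan R (w '' s) := subset_affineSpan R _ ⟨i0, hi0, rfl⟩
    have hv : (∑ i, sot_coord w hw i x • (w i - w i0)) ∈ (affineSpan R (w '' s)).direction := by
      apply Submodule.sum_mem
      intro i _
      by_cases hi : i ∈ s
      · apply Submodule.smul_mem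
        have := AffineSubspace.vsub_mem_direction (subset_affineSpan R (w '' s) ⟨i, hi, rfl⟩) hmem0
        rwa [vsub_eq_sub] at this
      · rw [hzero i hi, zero_smul]
        exact Submodule.zero_mem _
    have hmem := AffineSubspace.vadd_mem_of_mem_direction hv hmem0
    have hxe : (∑ i, sot_coord w hw i x • (w i - w i0)) +ᵥ w i0 = x := by
      rw [vadd_eq_add]
      have h1 : ∑ i, sot_coord w hw i x • (w i - w i0)
          = (∑ i, sot_coord w hw i x • w i) - (∑ i, sot_coord w hw i x) • w i0 := by
        rw [Finset.sum_smul, ← Finset.sum_sub_distrib]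
        exact Finset.sum_congr rfl fun i _ => by rw [smul_sub]
      rw [h1, sot_sum_coord w hw, sot_lincomb_coord w hw, one_smul]
      abel
    rwa [hxe] at hmem

end AuxSimplex
section AuxChar

variable {R : Type*} [Field R] [LinearOrder R] [IsStrictOrderedRing R] {n : ℕ}
variable (w : Fin (n + 1) → (Fin n → R)) (hw : AffineIndependent R w)

theorem sot_mem_simplex (x : Fin n → R) :
    x ∈ simplexHull R w ↔ ∀ i, 0 ≤ sot_coord w hw i x := by
  have he : simplexHull R w = faceOf R w Set.univ := by
    unfold simplexHull faceOf
    rw [Set.image_univ]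
  rw [he, sot_mem_face w hw]
  exact ⟨fun h => h.1, fun h => ⟨h, fun i hi => absurd (Set.mem_univ i) hi⟩⟩

theorem sot_mem_spanL {sτ : Set (Fin (n + 1))} (hsτ : sτ.Nonempty) (p x : Fin n → R) :
    x ∈ affineSpan R (faceOf R w sτ ∪ {p}) ↔
      ∃ t : R, ∀ j ∉ sτ, sot_coord w hw j x = t * sot_coord w hw j p := by
  constructor
  · intro hx
    let Q : AffineSubspace R (Fin n → R) :=
      { carrier := {y | ∃ t : R, ∀ j ∉ sτ, sot_coord w hw j y = t * sot_coord w hw j p}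
        smul_vsub_vadd_mem' := by
          intro cc p1 p2 p3 h1 h2 h3
          obtain ⟨t1, h1⟩ := h1
          obtain ⟨t2, h2⟩ := h2
          obtain ⟨t3, h3⟩ := h3
          refine ⟨cc * t1 - cc * t2 + t3, fun j hj => ?_⟩
          have he : cc • (p1 -ᵥ p2) +ᵥ p3 = p3 + cc • (p1 - p2) := by
            rw [vsub_eq_sub, vadd_eq_add, add_comm]
          rw [he, sot_coord_shift, h1 j hj, h2 j hj, h3 j hj]
          ring }
    have hsub : affineSpan R (faceOf R w sτ ∪ {p}) ≤ Q := by
      rw [affineSpan_le]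
      intro y hy
      rcases hy with hy | hy
      · have hcy := (sot_mem_face w hw sτ y).1 hy
        exact ⟨0, fun j hj => by rw [hcy.2 j hj, zero_mul]⟩
      · rw [Set.mem_singleton_iff] at hy
        subst hy
        exact ⟨1, fun j hj => by rw [one_mul]⟩
    exact hsub hx
  · rintro ⟨t, ht⟩
    obtain ⟨i0, hi0⟩ := hsτ
    have hqs : ∀ j ∉ sτ, sot_coord w hw j (w i0) = 0 :=
      fun j hj => sot_coord_apply_ne w hw fun he => hj (he ▸ hi0)
    have hl : x + (-t) • (p - w i0) ∈ affineSpan R (w '' sτ) := by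
      rw [sot_mem_spanface w hw ⟨i0, hi0⟩]
      intro j hj
      rw [sot_coord_shift, ht j hj, hqs j hj]
      ring
    have hsp : affineSpan R (w '' sτ) ≤ affineSpan R (faceOf R w sτ ∪ {p}) := by
      apply affineSpan_mono
      exact (Set.Subset.trans (subset_convexHull R _) Set.subset_union_left)
    have hpm : p ∈ affineSpan R (faceOf R w sτ ∪ {p}) :=
      subset_affineSpan R _ (Set.mem_union_right _ rfl)
    have hqm : w i0 ∈ affineSpan R (faceOf R w sτ ∪ {p}) :=
      hsp (subset_affineSpan R _ ⟨i0, hi0, rfl⟩)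
    have hxm := AffineSubspace.smul_vsub_vadd_mem _ t hpm hqm (hsp hl)
    have he : t • (p -ᵥ w i0) +ᵥ (x + (-t) • (p - w i0)) = x := by
      rw [vsub_eq_sub, vadd_eq_add, neg_smul]
      abel
    rwa [he] at hxm

theorem sot_spanL_eq {sτ : Set (Fin (n + 1))} :
    (affineSpan R (faceOf R w sτ) : Set (Fin n → R))
      = (affineSpan R (w '' sτ) : Set (Fin n → R)) := by
  have : affineSpan R (faceOf R w sτ) = affineSpan R (w '' sτ) :=
    le_antisymm (affineSpan_le.2 (convexHull_subset_affineSpan _))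
      (affineSpan_mono R (subset_convexHull R _))
  rw [this]

theorem sot_mem_halfspace {sτ : Set (Fin (n + 1))} (hsτ : sτ.Nonempty) (p x : Fin n → R) :
    x ∈ halfspacePlus R (affineSpan R (faceOf R w sτ) : Set (Fin n → R)) p ↔
      ∃ t : R, 0 ≤ t ∧ ∀ j ∉ sτ, sot_coord w hw j x = t * sot_coord w hw j p := by
  obtain ⟨i0, hi0⟩ := hsτ
  constructor
  · rintro ⟨l, hl, l', hl', t, ht, rfl⟩
    refine ⟨t, ht, fun j hj => ?_⟩
    rw [sot_spanL_eq] at hl hl'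
    have hl0 : sot_coord w hw j l = 0 := (sot_mem_spanface w hw ⟨i0, hi0⟩ l).1 hl j hj
    have hl0' : sot_coord w hw j l' = 0 := (sot_mem_spanface w hw ⟨i0, hi0⟩ l').1 hl' j hj
    rw [sot_coord_shift, hl0, hl0']
    ring
  · rintro ⟨t, ht, hc⟩
    have hqs : ∀ j ∉ sτ, sot_coord w hw j (w i0) = 0 :=
      fun j hj => sot_coord_apply_ne w hw fun he => hj (he ▸ hi0)
    have hl : x + (-t) • (p - w i0) ∈ affineSpan R (w '' sτ) := by
      rw [sot_mem_spanface w hw ⟨i0, hi0⟩]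
      intro j hj
      rw [sot_coord_shift, hc j hj, hqs j hj]
      ring
    refine ⟨x + (-t) • (p - w i0), ?_, w i0, ?_, t, ht, ?_⟩
    · rw [sot_spanL_eq]; exact hl
    · rw [sot_spanL_eq]
      exact subset_affineSpan R _ ⟨i0, hi0, rfl⟩
    · rw [neg_smul]
      abel

end AuxChar
set_option maxHeartbeats 1000000 in
/-- For an `n`-simplex `σ ⊆ R^n`, a face `τ` with affine span `L`, and `ε` small enough
that `Ū_{τ,ε} ∖ ∂τ` meets only the faces of `σ` containing `τ`:
`σ ∩ [L,p] ∩ Ū_{τ,ε} = [L,p]⁺ ∩ Ū_{τ,ε}` for each `p ∈ σ ∖ τ`. -/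
theorem section_of_tube_in_simplex
    {R : Type*} [Field R] [LinearOrder R] [IsStrictOrderedRing R] (hR : IsRealClosedField R)
    {n : ℕ} (w : Fin (n + 1) → (Fin n → R)) (hw : AffineIndependent R w)
    (sτ : Set (Fin (n + 1))) (hsτ : sτ.Nonempty)
    (ε : R) (hε0 : 0 < ε) (hε1 : ε < 1)
    (hε : ∀ s : Set (Fin (n + 1)), ¬ faceOf R w sτ ⊆ faceOf R w s →
      (UbarSet (faceOf R w sτ) (faceBoundaryOf R w sτ) ε \ faceBoundaryOf R w sτ) ∩
        faceOf R w s = ∅) :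
    ∀ p ∈ simplexHull R w \ faceOf R w sτ,
      simplexHull R w ∩
          (affineSpan R (faceOf R w sτ ∪ {p}) : Set (Fin n → R)) ∩
          UbarSet (faceOf R w sτ) (faceBoundaryOf R w sτ) ε =
        halfspacePlus R (affineSpan R (faceOf R w sτ) : Set (Fin n → R)) p ∩
          UbarSet (faceOf R w sτ) (faceBoundaryOf R w sτ) ε := by
    classical
  intro p hp
  obtain ⟨hpσ, hpτ⟩ := hp
  have hp0 : ∀ i, 0 ≤ sot_coord w hw i p := (sot_mem_simplex w hw p).1 hpσ
  have hpj : ∃ j, j ∉ sτ ∧ 0 < sot_coord w hw j p := by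
    by_contra h
    push_neg at h
    apply hpτ
    rw [sot_mem_face w hw]
    exact ⟨hp0, fun j hj => le_antisymm (h j hj) (hp0 j)⟩
  have hτfin : faceOf R w sτ
      = convexHull R ((sτ.toFinset.image w : Finset (Fin n → R)) : Set (Fin n → R)) := by
    unfold faceOf
    rw [Finset.coe_image, Set.coe_toFinset]
  have hτne_fin : (sτ.toFinset.image w).Nonempty :=
    ⟨w hsτ.choose, Finset.mem_image.2 ⟨hsτ.choose, Set.mem_toFinset.2 hsτ.choose_spec, rfl⟩⟩
  -- the key fact: points of the tube whose exterior coordinates are nonnegative lie in σ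
  have key : ∀ z ∈ UbarSet (faceOf R w sτ) (faceBoundaryOf R w sτ) ε,
      (∀ j, j ∉ sτ → 0 ≤ sot_coord w hw j z) → ∀ i, 0 ≤ sot_coord w hw i z := by
    intro z hzU hout
    by_contra hneg
    push_neg at hneg
    obtain ⟨i0, hi0⟩ := hneg
    have hi0τ : i0 ∈ sτ := by
      by_contra h
      exact absurd hi0 (not_lt.2 (hout i0 h))
    obtain ⟨a, haτ', hamin'⟩ := sot_np_rdist hR (sτ.toFinset.image w) hτne_fin z
    have haτ : a ∈ faceOf R w sτ := by rw [hτfin]; exact haτ'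
    have hamin : ∀ x ∈ faceOf R w sτ, rdist z a ≤ rdist z x := by
      intro x hx
      exact hamin' x (by rw [← hτfin]; exact hx)
    have hglbτ : glbDist rdist z (faceOf R w sτ) = rdist z a := sot_glbDist_eq rdist z haτ hamin
    have hac := (sot_mem_face w hw sτ a).1 haτ
    have hza : z ≠ a := fun he => absurd (he ▸ hi0) (not_lt.2 (hac.1 i0))
    have hdτ0 : 0 < rdist z a :=
      lt_of_le_of_ne (sot_rdist_nonneg z a) fun he => hza (sot_rdist_eq_zero hR he.symm)
    have hU1 : glbDist rdist z (faceOf R w sτ)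
        ≤ ε * glbDist rdist z (faceBoundaryOf R w sτ) := hzU
    have hτεdB : rdist z a ≤ ε * glbDist rdist z (faceBoundaryOf R w sτ) := by
      rw [← hglbτ]; exact hU1
    have hdB0 : 0 ≤ glbDist rdist z (faceBoundaryOf R w sτ) :=
      sot_glbDist_nonneg rdist z fun y => sot_rdist_nonneg z y
    have hdBpos : 0 < glbDist rdist z (faceBoundaryOf R w sτ) := by nlinarith
    by_cases hE : ∃ i ∈ sτ, sot_coord w hw i a = 0
    · obtain ⟨i1, hi1, hia⟩ := hE
      have haB : a ∈ faceBoundaryOf R w sτ := by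
        refine Set.mem_biUnion hi1 ?_
        rw [sot_mem_face w hw]
        refine ⟨hac.1, fun j hj => ?_⟩
        by_cases hjs : j ∈ sτ
        · have hj1 : j = i1 := by
            by_contra hne
            exact hj ⟨hjs, fun hm => hne hm⟩
          rw [hj1]; exact hia
        · exact hac.2 j hjs
      have hle : glbDist rdist z (faceBoundaryOf R w sτ) ≤ rdist z a := by
        rcases sot_glbDist_lb' rdist z haB with h | h
        · exact h
        · rw [h] at hdBpos; linarith
      nlinarith
    · push_neg at hE
      have hapos : ∀ i ∈ sτ, 0 < sot_coord w hw i a :=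
        fun i hi => lt_of_le_of_ne (hac.1 i) (Ne.symm (hE i hi))
      set If : Finset (Fin (n + 1)) := Finset.univ.filter (fun i => sot_coord w hw i z < 0)
        with hIf
      have hIne : If.Nonempty := ⟨i0, Finset.mem_filter.2 ⟨Finset.mem_univ _, hi0⟩⟩
      have hIsub : ∀ u ∈ If, u ∈ sτ := by
        intro u hu
        have hu' : sot_coord w hw u z < 0 := (Finset.mem_filter.1 hu).2
        by_contra h
        exact absurd hu' (not_lt.2 (hout u h))
      obtain ⟨u1, hu1I, hu1min⟩ := If.exists_min_image
        (fun u => sot_coord w hw u a / (sot_coord w hw u a - sot_coord w hw u z)) hIne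
      have hu1z : sot_coord w hw u1 z < 0 := (Finset.mem_filter.1 hu1I).2
      have hu1τ : u1 ∈ sτ := hIsub u1 hu1I
      have hden1 : 0 < sot_coord w hw u1 a - sot_coord w hw u1 z := by
        have := hapos u1 hu1τ; linarith
      set s := sot_coord w hw u1 a / (sot_coord w hw u1 a - sot_coord w hw u1 z) with hs
      have hs0 : 0 < s := div_pos (hapos u1 hu1τ) hden1
      have hs1 : s < 1 := by rw [hs, div_lt_one hden1]; linarith
      have hcy : ∀ j, sot_coord w hw j (a + s • (z - a))
          = sot_coord w hw j a + s * (sot_coord w hw j z - sot_coord w hw j a) :=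
        fun j => sot_coord_shift _ a z a s
      have hynn : ∀ j, 0 ≤ sot_coord w hw j (a + s • (z - a)) := by
        intro j
        rw [hcy j]
        by_cases hj : j ∈ If
        · have hjz : sot_coord w hw j z < 0 := (Finset.mem_filter.1 hj).2
          have hjτ := hIsub j hj
          have hdenj : 0 < sot_coord w hw j a - sot_coord w hw j z := by
            have := hapos j hjτ; linarith
          have hsj : s ≤ sot_coord w hw j a / (sot_coord w hw j a - sot_coord w hw j z) :=
            hu1min j hj
          have h5 : s * (sot_coord w hw j a - sot_coord w hw j z) ≤ sot_coord w hw j a :=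
            (le_div_iff₀ hdenj).1 hsj
          nlinarith
        · have hjz : 0 ≤ sot_coord w hw j z :=
            not_lt.1 fun hc' => hj (Finset.mem_filter.2 ⟨Finset.mem_univ _, hc'⟩)
          have hja : 0 ≤ sot_coord w hw j a := hac.1 j
          nlinarith
      have hcyu1 : sot_coord w hw u1 (a + s • (z - a)) = 0 := by
        rw [hcy u1]
        have hmul : s * (sot_coord w hw u1 z - sot_coord w hw u1 a)
            = -(sot_coord w hw u1 a) := by
          rw [hs]; field_simp; ring
        linarith
      have hrya : rdist (a + s • (z - a)) a = s * rdist z a := sot_rdist_seg hR hs0.le z a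
      have hglyτ : glbDist rdist (a + s • (z - a)) (faceOf R w sτ) ≤ s * rdist z a := by
        have h := sot_glbDist_le rdist (a + s • (z - a)) haτ
          (fun q => sot_rdist_nonneg _ q)
        rwa [hrya] at h
      have hrzy : rdist z (a + s • (z - a)) = (1 - s) * rdist z a :=
        sot_rdist_seg' hR hs1.le z a
      have hBne : (faceBoundaryOf R w sτ).Nonempty := by
        rcases Set.eq_empty_or_nonempty (faceBoundaryOf R w sτ) with h | h
        · rw [h, sot_glbDist_empty] at hdBpos
          linarith
        · exact h
      have hBd : faceBoundaryOf R w sτ = ⋃ i ∈ sτ.toFinset, faceOf R w (sτ \ {i}) := by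
        unfold faceBoundaryOf
        ext x
        simp [Set.mem_toFinset]
      have hBmin : ∃ bpt ∈ faceBoundaryOf R w sτ, ∀ x ∈ faceBoundaryOf R w sτ,
          rdist (a + s • (z - a)) bpt ≤ rdist (a + s • (z - a)) x := by
        rw [hBd]
        apply sot_min_union (a + s • (z - a)) sτ.toFinset _ ?_ (by rw [← hBd]; exact hBne)
        intro j hj
        rcases Set.eq_empty_or_nonempty ((sτ \ {j} : Set (Fin (n + 1)))) with hem | hnem
        · left
          unfold faceOf
          rw [hem, Set.image_empty, convexHull_empty]
        · right
          have hface : faceOf R w (sτ \ {j})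
              = convexHull R (((sτ \ {j}).toFinset.image w : Finset (Fin n → R))
                  : Set (Fin n → R)) := by
            unfold faceOf
            rw [Finset.coe_image, Set.coe_toFinset]
          have hfne : ((sτ \ {j}).toFinset.image w).Nonempty :=
            ⟨w hnem.choose, Finset.mem_image.2
              ⟨hnem.choose, Set.mem_toFinset.2 hnem.choose_spec, rfl⟩⟩
          obtain ⟨a', ha', hmin'⟩ := sot_np_rdist hR ((sτ \ {j}).toFinset.image w) hfne
            (a + s • (z - a))
          refine ⟨a', by rw [hface]; exact ha', fun x hx => ?_⟩
          exact hmin' x (by rw [← hface]; exact hx)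
      obtain ⟨bpt, hbB, hbmin⟩ := hBmin
      have hglyB : glbDist rdist (a + s • (z - a)) (faceBoundaryOf R w sτ)
          = rdist (a + s • (z - a)) bpt := sot_glbDist_eq rdist _ hbB hbmin
      have hzb : glbDist rdist z (faceBoundaryOf R w sτ) ≤ rdist z bpt := by
        rcases sot_glbDist_lb' rdist z hbB with h | h
        · exact h
        · rw [h] at hdBpos; linarith
      have hlbB : glbDist rdist z (faceBoundaryOf R w sτ) - (1 - s) * rdist z a
          ≤ rdist (a + s • (z - a)) bpt := by
        have htri := sot_rdist_triangle hR z (a + s • (z - a)) bpt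
        rw [hrzy] at htri
        linarith
      have hyU : (a + s • (z - a)) ∈ UbarSet (faceOf R w sτ) (faceBoundaryOf R w sτ) ε := by
        show glbDist rdist (a + s • (z - a)) (faceOf R w sτ)
          ≤ ε * glbDist rdist (a + s • (z - a)) (faceBoundaryOf R w sτ)
        rw [hglyB]
        have hτdB : rdist z a ≤ glbDist rdist z (faceBoundaryOf R w sτ) := by nlinarith
        calc glbDist rdist (a + s • (z - a)) (faceOf R w sτ) ≤ s * rdist z a := hglyτ
          _ ≤ ε * (glbDist rdist z (faceBoundaryOf R w sτ) - (1 - s) * rdist z a) := by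
              nlinarith [mul_nonneg (mul_nonneg (by linarith : (0:R) ≤ 1 - s) hε0.le)
                  (by linarith : (0:R) ≤ glbDist rdist z (faceBoundaryOf R w sτ) - rdist z a),
                mul_nonneg hs0.le
                  (by linarith :
                    (0:R) ≤ ε * glbDist rdist z (faceBoundaryOf R w sτ) - rdist z a)]
          _ ≤ ε * rdist (a + s • (z - a)) bpt := by nlinarith
      have hyface : (a + s • (z - a)) ∈ faceOf R w ((Set.univ : Set (Fin (n + 1))) \ {u1}) := by
        rw [sot_mem_face w hw]
        refine ⟨hynn, fun j hj => ?_⟩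
        have hj1 : j = u1 := by
          by_contra hne
          exact hj ⟨Set.mem_univ j, fun hm => hne hm⟩
        rw [hj1]
        exact hcyu1
      have hτns : ¬ faceOf R w sτ ⊆ faceOf R w ((Set.univ : Set (Fin (n + 1))) \ {u1}) := by
        intro hsub
        have hw1 : w u1 ∈ faceOf R w sτ := subset_convexHull R _ ⟨u1, hu1τ, rfl⟩
        have h2 := ((sot_mem_face w hw _ _).1 (hsub hw1)).2 u1 fun hmem => hmem.2 rfl
        rw [sot_coord_apply_eq w hw u1] at h2
        exact one_ne_zero h2
      have hεe := hε _ hτns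
      have hybd : (a + s • (z - a)) ∈ faceBoundaryOf R w sτ := by
        by_contra hnb
        have hmem : (a + s • (z - a)) ∈ (UbarSet (faceOf R w sτ) (faceBoundaryOf R w sτ) ε
            \ faceBoundaryOf R w sτ) ∩ faceOf R w ((Set.univ : Set (Fin (n + 1))) \ {u1}) :=
          ⟨⟨hyU, hnb⟩, hyface⟩
        rw [hεe] at hmem
        exact absurd hmem (Set.notMem_empty _)
      have hysupp : ∀ j ∉ sτ, sot_coord w hw j (a + s • (z - a)) = 0 := by
        intro j hj
        unfold faceBoundaryOf at hybd
        rw [Set.mem_iUnion₂] at hybd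
        obtain ⟨i, hiτ, hyf⟩ := hybd
        exact ((sot_mem_face w hw _ _).1 hyf).2 j fun hmem => hj hmem.1
      have hzsupp : ∀ j ∉ sτ, sot_coord w hw j z = 0 := by
        intro j hj
        have h1 := hysupp j hj
        rw [hcy j, hac.2 j hj] at h1
        have h2 : s * sot_coord w hw j z = 0 := by linarith
        rcases mul_eq_zero.1 h2 with h | h
        · exact absurd h (ne_of_gt hs0)
        · exact h
      have ha'τ : a + (s / 2) • (z - a) ∈ faceOf R w sτ := by
        rw [sot_mem_face w hw]
        constructor
        · intro j
          rw [sot_coord_shift]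
          by_cases hj : j ∈ If
          · have hjz : sot_coord w hw j z < 0 := (Finset.mem_filter.1 hj).2
            have hjτ := hIsub j hj
            have hdenj : 0 < sot_coord w hw j a - sot_coord w hw j z := by
              have := hapos j hjτ; linarith
            have hsj : s ≤ sot_coord w hw j a / (sot_coord w hw j a - sot_coord w hw j z) :=
              hu1min j hj
            have h5 : s * (sot_coord w hw j a - sot_coord w hw j z) ≤ sot_coord w hw j a :=
              (le_div_iff₀ hdenj).1 hsj
            nlinarith
          · have hjz : 0 ≤ sot_coord w hw j z :=
              not_lt.1 fun hc' => hj (Finset.mem_filter.2 ⟨Finset.mem_univ _, hc'⟩)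
            have hja : 0 ≤ sot_coord w hw j a := hac.1 j
            nlinarith
        · intro j hj
          rw [sot_coord_shift, hac.2 j hj, hzsupp j hj]
          ring
      have hda' : rdist z (a + (s / 2) • (z - a)) = (1 - s / 2) * rdist z a :=
        sot_rdist_seg' hR (by linarith) z a
      have hga' : glbDist rdist z (faceOf R w sτ) ≤ rdist z (a + (s / 2) • (z - a)) :=
        sot_glbDist_le rdist z ha'τ fun q => sot_rdist_nonneg z q
      rw [hglbτ, hda'] at hga'
      nlinarith
  -- now the set equality
  ext z
  simp only [Set.mem_inter_iff]
  constructor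
  · rintro ⟨⟨hzσ, hzsp⟩, hzU⟩
    refine ⟨?_, hzU⟩
    obtain ⟨t, hts⟩ := (sot_mem_spanL w hw hsτ p z).1 hzsp
    obtain ⟨j, hjn, hjp⟩ := hpj
    have hzj : 0 ≤ sot_coord w hw j z := (sot_mem_simplex w hw z).1 hzσ j
    have ht0 : 0 ≤ t := by
      have h := hts j hjn
      nlinarith
    exact (sot_mem_halfspace w hw hsτ p z).2 ⟨t, ht0, hts⟩
  · rintro ⟨hzh, hzU⟩
    obtain ⟨t, ht0, hts⟩ := (sot_mem_halfspace w hw hsτ p z).1 hzh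
    refine ⟨⟨?_, (sot_mem_spanL w hw hsτ p z).2 ⟨t, hts⟩⟩, hzU⟩
    rw [sot_mem_simplex w hw]
    apply key z hzU
    intro j hj
    rw [hts j hj]
    exact mul_nonneg ht0 (hp0 j)
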